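/- Let M ≥ 1. If ⁅Φ, P (2m)⁆ = 0 holds for all m with 1 ≤ m ≤ M, then ⁅P k, P l⁆ = 0 holds for all k, l ≥ 1 with k + l ≤ 2M + 2. (Lemma property_boost_general of the Supplemental Material.) -/
import Mathlib


/-- Lemma property_boost_general of the Supplemental Material:
In a Lie ring `L`, with `P 1 = Φ` and `P (n+1) = ⁅B, P n⁆` for `n ≥ 1`, if
`⁅Φ, P (2m)⁆ = 0` for all `1 ≤ m ≤ M`, then `⁅P k, P l⁆ = 0` for all
`k, l ≥ 1` with `k + l ≤ 2M + 2`. -/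
theorem property_boost_general {L : Type*} [LieRing L] (B Φ : L)
    (P : ℕ → L) (hP1 : P 1 = Φ)
    (hPrec : ∀ n, 1 ≤ n → P (n + 1) = ⁅B, P n⁆)
    (M : ℕ) (hM : 1 ≤ M)
    (h : ∀ m, 1 ≤ m → m ≤ M → ⁅Φ, P (2 * m)⁆ = 0) :
    ∀ k l, 1 ≤ k → 1 ≤ l → k + l ≤ 2 * M + 2 → ⁅P k, P l⁆ = 0 := by
  have key : ∀ k l, 1 ≤ k → 1 ≤ l →
      ⁅P (k+1), P l⁆ = ⁅B, ⁅P k, P l⁆⁆ - ⁅P k, P (l+1)⁆ := by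
    intro k l hk hl
    rw [hPrec k hk, hPrec l hl, lie_lie]
  have main : ∀ s, s ≤ 2*M+2 → ∀ k l, 1 ≤ k → 1 ≤ l → k + l = s →
      ⁅P k, P l⁆ = 0 := by
    intro s
    induction s using Nat.strong_induction_on with
    | _ s ih =>
      intro hs k l hk hl hkl
      rcases Nat.lt_or_ge s 3 with h3 | h3
      · -- s = 2, so k = l = 1
        have hk1 : k = 1 := by omega
        have hl1 : l = 1 := by omega
        subst hk1; subst hl1; exact lie_self _
      · -- previous level vanishes
        have hprev : ∀ a b, 1 ≤ a → 1 ≤ b → a + b = s - 1 → ⁅P a, P b⁆ = 0 :=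
          fun a b ha hb hab => ih (s-1) (by omega) (by omega) a b ha hb hab
        have flip : ∀ a b, 1 ≤ a → 1 ≤ b → a + b = s - 1 →
            ⁅P (a+1), P b⁆ = -⁅P a, P (b+1)⁆ := by
          intro a b ha hb hab
          rw [key a b ha hb, hprev a b ha hb hab, lie_zero, zero_sub]
        have sgn : ∀ a b, 1 ≤ b → a + 1 + b = s →
            ⁅P (a+1), P b⁆ = ((-1 : ℤ)^a) • ⁅P 1, P (s-1)⁆ := by
          intro a
          induction a with
          | zero =>
            intro b hb hab
            have : b = s - 1 := by omega
            subst this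
            simp
          | succ a iha =>
            intro b hb hab
            have h1 : (a+1) + b = s - 1 := by omega
            rw [flip (a+1) b (by omega) hb h1,
              iha (b+1) (by omega) (by omega), pow_succ]
            rw [mul_smul, neg_one_zsmul, smul_neg]
        have hQ1 : ⁅P 1, P (s-1)⁆ = 0 := by
          rcases Nat.even_or_odd s with he | ho
          · -- s even, use k = l = s/2
            obtain ⟨t, ht⟩ := he
            have htt : 1 ≤ t := by omega
            have hd : ⁅P t, P t⁆ = 0 := lie_self _
            have := sgn (t-1) t htt (by omega)
            have h2 : t - 1 + 1 = t := by omega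
            rw [h2] at this
            rw [this] at hd
            have := congrArg (fun x => ((-1:ℤ)^(t-1)) • x) hd
            simpa [smul_smul, ← pow_add, ← two_mul, pow_mul] using this
          · -- s odd, s - 1 = 2m
            obtain ⟨m, hm⟩ := ho
            have hm1 : 1 ≤ m := by omega
            have hmM : m ≤ M := by omega
            have hs1 : s - 1 = 2 * m := by omega
            rw [hs1, hP1]
            exact h m hm1 hmM
        obtain ⟨a, ha⟩ : ∃ a, k = a + 1 := ⟨k - 1, by omega⟩
        subst ha
        rw [sgn a l hl hkl, hQ1, smul_zero]
  intro k l hk hl hkl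
  exact main (k + l) hkl k l hk hl rfl
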